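/- Let X and U be nonempty sets, let f : X → U → X define a discrete-time system that is T_d-controllable, let κ be a strictly positive definite kernel on X × U, fix anchor points z̃_1,…,z̃_M ∈ X × U, an initial state x₀ ∈ X, and N ≥ M·(T_d + 1). For each input sequence u : {0,…,N−1} → U let S(u) = {(x(j), u(j)) : 0 ≤ j ≤ N−1} be the generated dataset and V(S(u)) = (1/M)·Σ_{i=1}^{M} Var(z̃_i ; S(u)) the average GP posterior variance at the anchors. Then the infimum of V(S(u)) over all input sequences u : {0,…,N−1} → U equals 0, and it is attained: there exists an input sequence u with V(S(u)) = 0. -/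

import Mathlib

open Matrix
open scoped Classical

/-- A strictly positive definite kernel: every Gram matrix built from pairwise-distinct
points is positive definite. -/
def IsStrictlyPDKernel {Z : Type*} (κ : Z → Z → ℝ) : Prop :=
  ∀ (n : ℕ) (z : Fin n → Z), Function.Injective z →
    (Matrix.of fun i j => κ (z i) (z j)).PosDef

/-- GP posterior variance at a query point `zq`, given the (pairwise-distinct) data points
in the finite set `S`: `κ(z̃,z̃) − k K⁻¹ kᵀ` with `K` the Gram matrix of `S` and `k` the
vector of kernel evaluations between `zq` and the points of `S`. -/
noncomputable def postVar {Z : Type*} (κ : Z → Z → ℝ) (S : Finset Z) (zq : Z) : ℝ :=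
  κ zq zq -
    (fun i : S => κ zq (i : Z)) ⬝ᵥ
      ((Matrix.of fun i j : S => κ (i : Z) (j : Z))⁻¹ *ᵥ fun i : S => κ zq (i : Z))

/-- Trajectory of the discrete-time system `x(k+1) = f(x(k), u(k))` starting at `x0`. -/
def traj {X U : Type*} (f : X → U → X) (x0 : X) (u : ℕ → U) : ℕ → X
  | 0 => x0
  | k + 1 => f (traj f x0 u k) (u k)

/-- `Td`-controllability: any state can be driven to any other state in at most `Td`
(and at least one) steps by a suitable input sequence. -/
def Controllable {X U : Type*} (f : X → U → X) (Td : ℕ) : Prop :=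
  ∀ x1 x2 : X, ∃ T : ℕ, 1 ≤ T ∧ T ≤ Td ∧ ∃ u : ℕ → U, traj f x1 u T = x2

/-- Generated dataset: the set of joint input-state points `{(x(j), u(j)) : 0 ≤ j ≤ N−1}`
of the trajectory with `x(0) = x0`. -/
noncomputable def dataset {X U : Type*} (f : X → U → X) (x0 : X) (u : ℕ → U) (N : ℕ) :
    Finset (X × U) :=
  Finset.image (fun j => (traj f x0 u j, u j)) (Finset.range N)

lemma posDef_submatrix_equiv {n m : Type*} [Fintype n] [Fintype m] [DecidableEq n]
    [DecidableEq m] {M : Matrix n n ℝ} (hM : M.PosDef) (e : m ≃ n) :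
    (M.submatrix e e).PosDef := by
  refine Matrix.PosDef.of_dotProduct_mulVec_pos ((Matrix.isHermitian_submatrix_equiv e).2 hM.1) fun x hx => ?_
  have hx' : x ∘ e.symm ≠ 0 := by
    intro h; apply hx; ext i
    have := congrFun h (e i); simpa using this
  have h := hM.dotProduct_mulVec_pos hx'
  have hmv : (M.submatrix e e) *ᵥ x = (M *ᵥ (x ∘ e.symm)) ∘ e := by
    ext i
    simp [Matrix.mulVec, dotProduct, Matrix.submatrix]
    exact Fintype.sum_equiv e _ _ (by simp)
  rw [hmv]
  calc (0:ℝ) < star (x ∘ e.symm) ⬝ᵥ (M *ᵥ (x ∘ e.symm)) := h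
    _ = star x ⬝ᵥ ((M *ᵥ (x ∘ e.symm)) ∘ e) := by
        simp [dotProduct]
        exact (Fintype.sum_equiv e _ _ (by simp)).symm

lemma gram_posDef {Z : Type*} {κ : Z → Z → ℝ} (hκ : IsStrictlyPDKernel κ)
    {ι : Type*} [Fintype ι] [DecidableEq ι] (g : ι → Z) (hg : Function.Injective g) :
    (Matrix.of fun i j => κ (g i) (g j)).PosDef := by
  let e := Fintype.equivFin ι
  have h := hκ _ (g ∘ e.symm) (hg.comp e.symm.injective)
  have heq : (Matrix.of fun i j => κ (g i) (g j)) =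
      (Matrix.of fun i j : Fin (Fintype.card ι) => κ ((g ∘ e.symm) i) ((g ∘ e.symm) j)).submatrix e e := by
    ext i j; simp
  rw [heq]
  exact posDef_submatrix_equiv h e

lemma postVar_eq_zero_of_mem {Z : Type*} {κ : Z → Z → ℝ} (hκ : IsStrictlyPDKernel κ)
    {S : Finset Z} {zq : Z} (hz : zq ∈ S) : postVar κ S zq = 0 := by
  classical
  set K : Matrix S S ℝ := Matrix.of fun i j : S => κ (i : Z) (j : Z) with hKdef
  have hK : K.PosDef := gram_posDef hκ (fun i : S => (i : Z)) Subtype.coe_injective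
  have hdet : IsUnit K.det := isUnit_iff_ne_zero.2 hK.det_pos.ne'
  set i0 : S := ⟨zq, hz⟩
  set k : S → ℝ := fun i : S => κ zq (i : Z) with hkdef
  have hsym : ∀ i : S, κ (i : Z) zq = κ zq (i : Z) := by
    intro i
    have := congrFun (congrFun hK.1 i0) i
    simpa [Matrix.conjTranspose_apply, K, i0] using this
  have hk : k = K *ᵥ Pi.single i0 1 := by
    ext i
    simp [Matrix.mulVec_single, K, k, i0, hsym i]
  have hKik : K⁻¹ *ᵥ k = Pi.single i0 1 := by
    rw [hk, Matrix.mulVec_mulVec, Matrix.nonsing_inv_mul K hdet, Matrix.one_mulVec]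
  unfold postVar
  rw [← hkdef, ← hKdef, hKik, dotProduct_single]
  simp [k, i0]

lemma postVar_nonneg {Z : Type*} {κ : Z → Z → ℝ} (hκ : IsStrictlyPDKernel κ)
    (S : Finset Z) (zq : Z) : 0 ≤ postVar κ S zq := by
  classical
  by_cases hz : zq ∈ S
  · exact le_of_eq (postVar_eq_zero_of_mem hκ hz).symm
  set K : Matrix S S ℝ := Matrix.of fun i j : S => κ (i : Z) (j : Z) with hKdef
  have hK : K.PosDef := gram_posDef hκ (fun i : S => (i : Z)) Subtype.coe_injective
  have hdet : IsUnit K.det := isUnit_iff_ne_zero.2 hK.det_pos.ne'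
  have hinv : Invertible K := K.invertibleOfIsUnitDet hdet
  set g : Unit ⊕ S → Z := Sum.elim (fun _ => zq) (fun i => (i : Z)) with hgdef
  have hg : Function.Injective g := by
    rintro (a | a) (b | b) h
    · rfl
    · simp only [g, Sum.elim_inl, Sum.elim_inr] at h
      exact absurd (show zq ∈ S by rw [h]; exact b.2) hz
    · simp only [g, Sum.elim_inl, Sum.elim_inr] at h
      exact absurd (show zq ∈ S by rw [← h]; exact a.2) hz
    · simp only [g, Sum.elim_inl, Sum.elim_inr] at h
      exact congrArg Sum.inr (Subtype.coe_injective h)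
  have hG : (Matrix.of fun i j => κ (g i) (g j)).PosDef := gram_posDef hκ g hg
  set B : Matrix Unit S ℝ := Matrix.of fun _ j => κ zq (j : Z) with hBdef
  set A : Matrix Unit Unit ℝ := Matrix.of fun _ _ => κ zq zq with hAdef
  have hblocks : (Matrix.of fun i j => κ (g i) (g j)) = Matrix.fromBlocks A B Bᴴ K := by
    ext i j
    rcases i with a | a <;> rcases j with b | b
    · rfl
    · rfl
    · have := congrFun (congrFun hG.1 (Sum.inl b)) (Sum.inr a)
      simpa [Matrix.conjTranspose_apply, Matrix.fromBlocks, g, B] using this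
    · rfl
  have hPS : (Matrix.fromBlocks A B Bᴴ K).PosSemidef := hblocks ▸ hG.posSemidef
  have h2 := (Matrix.PosDef.fromBlocks₂₂ A B hK).1 hPS
  have hx := h2.dotProduct_mulVec_nonneg (fun _ : Unit => (1 : ℝ))
  have hval : star (fun _ : Unit => (1 : ℝ)) ⬝ᵥ ((A - B * K⁻¹ * Bᴴ) *ᵥ fun _ => 1) =
      postVar κ S zq := by
    have hentry : (B * K⁻¹ * Bᴴ) () () =
        (fun i : S => κ zq (i : Z)) ⬝ᵥ (K⁻¹ *ᵥ fun i : S => κ zq (i : Z)) := by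
      rw [Matrix.mul_assoc]
      simp [Matrix.mul_apply, Matrix.mulVec, dotProduct, B, Finset.mul_sum]
    simp only [Matrix.mulVec, dotProduct, Fintype.sum_unique, star_trivial, one_mul,
      mul_one, Matrix.sub_apply]
    rw [hentry]
    simp [postVar, A, hKdef]
  rw [hval] at hx
  exact hx

lemma traj_congr {X U : Type*} (f : X → U → X) (x0 : X) {u v : ℕ → U} {n : ℕ}
    (h : ∀ j < n, u j = v j) : ∀ j ≤ n, traj f x0 u j = traj f x0 v j := by
  intro j hj
  induction j with
  | zero => rfl
  | succ k ih =>
    have hk : k ≤ n := Nat.le_of_succ_le hj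
    rw [traj, traj, ih hk, h k (Nat.lt_of_succ_le hj)]

lemma traj_add {X U : Type*} (f : X → U → X) (x0 : X) (u : ℕ → U) (a : ℕ) :
    ∀ k, traj f x0 u (a + k) = traj f (traj f x0 u a) (fun j => u (a + j)) k := by
  intro k
  induction k with
  | zero => rfl
  | succ k ih => rw [← Nat.add_assoc, traj, traj, ih]

lemma reach {X U : Type*} [Nonempty U] (f : X → U → X) (Td : ℕ)
    (hctrl : Controllable f Td) :
    ∀ (l : List (X × U)) (x0 : X), ∃ u : ℕ → U,
      ∀ z ∈ l, ∃ j < l.length * (Td + 1), (traj f x0 u j, u j) = z := by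
  intro l
  induction l with
  | nil => exact fun x0 => ⟨fun _ => Classical.arbitrary U, by simp⟩
  | cons z l ih =>
    intro x0
    obtain ⟨T, hT1, hTTd, u1, hu1⟩ := hctrl x0 z.1
    obtain ⟨u2, hu2⟩ := ih (f z.1 z.2)
    set u : ℕ → U := fun j => if j < T then u1 j else if j = T then z.2 else u2 (j - (T + 1))
      with hudef
    have huT : u T = z.2 := by simp [u]
    have hagree : ∀ j < T, u j = u1 j := fun j hj => by simp [u, hj]
    have htrajT : traj f x0 u T = z.1 := by
      rw [traj_congr f x0 hagree T le_rfl]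
      exact hu1
    have hshift : (fun i => u (T + 1 + i)) = u2 := by
      funext i
      have h1 : ¬ T + 1 + i < T := by omega
      have h2 : ¬ T + 1 + i = T := by omega
      have h3 : T + 1 + i - (T + 1) = i := by omega
      simp only [u, h1, if_false, h2, h3]
    have htrajT1 : traj f x0 u (T + 1) = f z.1 z.2 := by
      rw [traj, htrajT, huT]
    refine ⟨u, ?_⟩
    intro z' hz'
    rcases List.mem_cons.1 hz' with rfl | hz'
    · exact ⟨T, by simp [List.length_cons]; nlinarith, by rw [htrajT, huT]⟩
    · obtain ⟨j, hj, hje⟩ := hu2 z' hz'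
      refine ⟨T + 1 + j, ?_, ?_⟩
      · simp [List.length_cons]
        have : T + 1 ≤ Td + 1 := by omega
        calc T + 1 + j < T + 1 + l.length * (Td + 1) := by omega
          _ ≤ (Td + 1) + l.length * (Td + 1) := by omega
          _ = (l.length + 1) * (Td + 1) := by ring
      · rw [traj_add f x0 u (T + 1) j, htrajT1, hshift]
        have : u (T + 1 + j) = u2 j := congrFun hshift j
        rw [this, hje]

/-- For a `Td`-controllable system, a strictly positive definite kernel,
`M` anchor points, an initial state and `N ≥ M·(Td+1)`, the infimum over all input
sequences of the average GP posterior variance at the anchors equals `0`, and it is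
attained by some input sequence. -/
theorem statement10 {X U : Type*} [Nonempty X] [Nonempty U]
    (f : X → U → X) (Td : ℕ) (hTd : 0 < Td) (hctrl : Controllable f Td)
    (κ : X × U → X × U → ℝ) (hκ : IsStrictlyPDKernel κ)
    {M : ℕ} (hM : 0 < M) (anchors : Fin M → X × U)
    (x0 : X) (N : ℕ) (hN : M * (Td + 1) ≤ N) :
    sInf (Set.range fun u : ℕ → U =>
        (1 / (M : ℝ)) * ∑ i, postVar κ (dataset f x0 u N) (anchors i)) = 0 ∧
      ∃ u : ℕ → U,
        (1 / (M : ℝ)) * ∑ i, postVar κ (dataset f x0 u N) (anchors i) = 0 := by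
  obtain ⟨ustar, hustar⟩ := reach f Td hctrl ((List.finRange M).map anchors) x0
  have hlen : ((List.finRange M).map anchors).length = M := by simp
  have hmem : ∀ i : Fin M, anchors i ∈ dataset f x0 ustar N := by
    intro i
    obtain ⟨j, hj, hje⟩ := hustar (anchors i)
      (List.mem_map.2 ⟨i, List.mem_finRange i, rfl⟩)
    rw [hlen] at hj
    exact Finset.mem_image.2 ⟨j, Finset.mem_range.2 (lt_of_lt_of_le hj hN), hje⟩
  have hzero : (1 / (M : ℝ)) * ∑ i, postVar κ (dataset f x0 ustar N) (anchors i) = 0 := by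
    rw [Finset.sum_eq_zero fun i _ => postVar_eq_zero_of_mem hκ (hmem i), mul_zero]
  have hlb : ∀ r ∈ Set.range (fun u : ℕ → U =>
      (1 / (M : ℝ)) * ∑ i, postVar κ (dataset f x0 u N) (anchors i)), (0:ℝ) ≤ r := by
    rintro r ⟨u, rfl⟩
    exact mul_nonneg (by positivity)
      (Finset.sum_nonneg fun i _ => postVar_nonneg hκ _ _)
  refine ⟨le_antisymm (csInf_le ⟨0, hlb⟩ ⟨ustar, hzero⟩)
    (le_csInf ⟨_, ⟨ustar, rfl⟩⟩ hlb), ⟨ustar, hzero⟩⟩
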